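/- For all real x, ∫₀^π θ sin θ · √(1 + x² cos² θ) dθ = (π/(2x)) · (x√(1+x²) + log(x + √(1+x²))) for x ≠ 0 (and equals π at x = 0). -/

import Mathlib

open Real intervalIntegral

lemma contS (x : ℝ) : Continuous (fun u : ℝ => Real.sqrt (1 + x^2*u^2)) := by
  fun_prop

lemma hF (x : ℝ) (hx : x ≠ 0) (u : ℝ) :
    HasDerivAt (fun u : ℝ => u * Real.sqrt (1 + x^2*u^2)/2 + Real.arsinh (x*u)/(2*x))
      (Real.sqrt (1 + x^2*u^2)) u := by
  have hSpos : (0:ℝ) < 1 + x^2*u^2 := by positivity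
  have hsqpos : (0:ℝ) < Real.sqrt (1 + x^2*u^2) := Real.sqrt_pos.2 hSpos
  have h1 : HasDerivAt (fun u : ℝ => 1 + x^2*u^2) (x^2*(2*u)) u := by
    simpa using ((hasDerivAt_pow 2 u).const_mul (x^2)).const_add 1
  have hs := h1.sqrt hSpos.ne'
  have hmul := (hasDerivAt_id u).mul hs
  have hin : HasDerivAt (fun y : ℝ => x*y) x u := by
    simpa using (hasDerivAt_id u).const_mul x
  have harsinh : HasDerivAt (fun u : ℝ => Real.arsinh (x*u))
      ((Real.sqrt (1 + (x*u)^2))⁻¹ * x) u :=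
    (Real.hasDerivAt_arsinh (x*u)).comp u hin
  have heq : (1 + (x*u)^2) = 1 + x^2*u^2 := by ring
  rw [heq] at harsinh
  have := (hmul.div_const 2).add ((harsinh.div_const (2*x)))
  refine this.congr_deriv ?_
  have h2 : Real.sqrt (1 + x^2*u^2) * Real.sqrt (1 + x^2*u^2) = 1 + x^2*u^2 :=
    Real.mul_self_sqrt hSpos.le
  field_simp
  simp only [id]; linear_combination -h2

lemma int_sqrt (x : ℝ) (hx : x ≠ 0) :
    ∫ u in (-1:ℝ)..1, Real.sqrt (1 + x^2*u^2)
      = Real.sqrt (1+x^2) + Real.arsinh x / x := by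
  rw [intervalIntegral.integral_eq_sub_of_hasDerivAt (fun u _ => hF x hx u)
    ((contS x).intervalIntegrable _ _)]
  have h1 : x*1 = x := mul_one x
  have : x^2*(1:ℝ)^2 = x^2 := by ring
  rw [show x*(-1:ℝ) = -x by ring]
  rw [Real.arsinh_neg]
  have h2 : (1:ℝ) + x^2*(-1)^2 = 1 + x^2 := by ring
  have h3 : (1:ℝ) + x^2*1^2 = 1 + x^2 := by ring
  rw [h1, h2, h3]
  field_simp
  ring

theorem stmt_11 (x : ℝ) :
    (x ≠ 0 →
      ∫ θ in (0:ℝ)..Real.pi, θ * Real.sin θ * Real.sqrt (1 + x ^ 2 * Real.cos θ ^ 2)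
        = Real.pi / (2 * x) *
          (x * Real.sqrt (1 + x ^ 2) + Real.log (x + Real.sqrt (1 + x ^ 2)))) ∧
    (x = 0 →
      ∫ θ in (0:ℝ)..Real.pi, θ * Real.sin θ * Real.sqrt (1 + x ^ 2 * Real.cos θ ^ 2)
        = Real.pi) := by
  have hzero : ∫ θ in (0:ℝ)..Real.pi, θ * Real.sin θ = Real.pi := by
    have key : ∀ θ : ℝ, HasDerivAt (fun θ : ℝ => Real.sin θ - θ * Real.cos θ)
        (θ * Real.sin θ) θ := by
      intro θ
      have := (Real.hasDerivAt_sin θ).sub ((hasDerivAt_id θ).mul (Real.hasDerivAt_cos θ))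
      simp only [id] at this
      exact this.congr_deriv (by ring)
    rw [intervalIntegral.integral_eq_sub_of_hasDerivAt (fun θ _ => key θ)
      ((by fun_prop : Continuous (fun θ : ℝ => θ * Real.sin θ)).intervalIntegrable _ _)]
    simp
  constructor
  · intro hx
    -- symmetry step
    set f : ℝ → ℝ := fun θ => θ * Real.sin θ * Real.sqrt (1 + x ^ 2 * Real.cos θ ^ 2) with hf
    have hsym : ∫ θ in (0:ℝ)..Real.pi, f θ
        = ∫ θ in (0:ℝ)..Real.pi, (Real.pi - θ) * Real.sin θ * Real.sqrt (1 + x ^ 2 * Real.cos θ ^ 2) := by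
      have := intervalIntegral.integral_comp_sub_left (a := (0:ℝ)) (b := Real.pi) f Real.pi
      simp only [sub_zero, sub_self] at this
      rw [← this]
      apply intervalIntegral.integral_congr
      intro θ _
      simp only [hf]
      rw [Real.sin_pi_sub, Real.cos_pi_sub]
      ring_nf
    have hJ : ∫ θ in (0:ℝ)..Real.pi, Real.sin θ * Real.sqrt (1 + x ^ 2 * Real.cos θ ^ 2)
        = Real.sqrt (1+x^2) + Real.arsinh x / x := by
      have hsub := intervalIntegral.integral_comp_smul_deriv
        (f := Real.cos) (f' := fun θ => -Real.sin θ)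
        (g := fun u => Real.sqrt (1 + x^2*u^2)) (a := 0) (b := Real.pi)
        (fun θ _ => Real.hasDerivAt_cos θ) (Real.continuous_sin.neg.continuousOn) (contS x)
      simp only [Real.cos_zero, Real.cos_pi, smul_eq_mul, Function.comp] at hsub
      have h2 : ∫ θ in (0:ℝ)..Real.pi, Real.sin θ * Real.sqrt (1 + x^2*Real.cos θ^2)
          = ∫ u in (-1:ℝ)..1, Real.sqrt (1 + x^2*u^2) := by
        have hs2 : (∫ u in (1:ℝ)..(-1:ℝ), Real.sqrt (1+x^2*u^2))
            = -∫ u in (-1:ℝ)..1, Real.sqrt (1+x^2*u^2) :=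
          intervalIntegral.integral_symm (-1) 1
        rw [hs2] at hsub
        have hn : (∫ θ in (0:ℝ)..Real.pi, -Real.sin θ * Real.sqrt (1+x^2*Real.cos θ^2))
            = -∫ θ in (0:ℝ)..Real.pi, Real.sin θ * Real.sqrt (1+x^2*Real.cos θ^2) := by
          rw [← intervalIntegral.integral_neg]; congr 1; funext θ; ring
        rw [hn] at hsub
        linarith
      rw [h2, int_sqrt x hx]
    have hII : (2:ℝ) * ∫ θ in (0:ℝ)..Real.pi, f θ
        = Real.pi * (Real.sqrt (1+x^2) + Real.arsinh x / x) := by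
      have expand : ∫ θ in (0:ℝ)..Real.pi, (Real.pi - θ) * Real.sin θ * Real.sqrt (1 + x ^ 2 * Real.cos θ ^ 2)
          = Real.pi * (∫ θ in (0:ℝ)..Real.pi, Real.sin θ * Real.sqrt (1 + x ^ 2 * Real.cos θ ^ 2))
            - ∫ θ in (0:ℝ)..Real.pi, f θ := by
        have hi1 : IntervalIntegrable (fun θ : ℝ => Real.sin θ * Real.sqrt (1 + x ^ 2 * Real.cos θ ^ 2)) MeasureTheory.volume 0 Real.pi := by
          apply Continuous.intervalIntegrable; fun_prop
        have hi2 : IntervalIntegrable f MeasureTheory.volume 0 Real.pi := by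
          apply Continuous.intervalIntegrable; fun_prop
        rw [← intervalIntegral.integral_const_mul, ← intervalIntegral.integral_sub
          (hi1.const_mul _) hi2]
        apply intervalIntegral.integral_congr
        intro θ _; simp only [hf]; ring
      rw [two_mul]
      nth_rewrite 1 [hsym]
      rw [expand, hJ]; ring
    have harsinh : Real.arsinh x = Real.log (x + Real.sqrt (1 + x^2)) := rfl
    have : ∫ θ in (0:ℝ)..Real.pi, f θ = Real.pi / 2 * (Real.sqrt (1+x^2) + Real.arsinh x / x) := by
      linarith
    rw [show (∫ θ in (0:ℝ)..Real.pi, θ * Real.sin θ * Real.sqrt (1 + x ^ 2 * Real.cos θ ^ 2)) = ∫ θ in (0:ℝ)..Real.pi, f θ from rfl, this, ← harsinh]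
    field_simp
  · intro hx
    subst hx
    simp only [ne_eq, OfNat.ofNat_ne_zero, not_false_eq_true, zero_pow, zero_mul, add_zero,
      Real.sqrt_one, mul_one]
    exact hzero
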